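/- Let R be a commutative 𝔽_p-algebra and let 𝕎₁(R) denote the zip frame of R. Then 𝕎₁(R) is a final object among frames for R: for every frame (S, σ, τ) for R, the maps πₙ : Sₙ → R defined by π₀ = the projection S₀ → R = S₀/tS₁, π₋ₙ(a) = π₀(τ(a)) for a ∈ S₋ₙ with n ≥ 1, and πₙ(b) = π₀(σ(b)) for b ∈ Sₙ with n ≥ 1, assemble to the unique homomorphism of frames S → 𝕎₁(R) inducing the identity of R. -/

import Mathlib

/-- A (higher) frame. -/
structure Frame (p : ℕ) (S : Type) [CommRing S] where
  grade : ℤ → AddSubgroup S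
  one_mem : (1 : S) ∈ grade 0
  mul_mem : ∀ {m n : ℤ} {a b : S}, a ∈ grade m → b ∈ grade n → a * b ∈ grade (m + n)
  isInternal : DirectSum.IsInternal grade
  σ : S →+* S
  τ : S →+* S
  σ_mem : ∀ s, σ s ∈ grade 0
  τ_mem : ∀ s, τ s ∈ grade 0
  τ_id : ∀ s ∈ grade 0, τ s = s
  τ_bij : ∀ n : ℕ, 1 ≤ n → Set.BijOn τ (grade (-(n : ℤ))) (grade 0)
  t : S
  t_mem : t ∈ grade (-1)
  τ_t : τ t = 1
  σ_frob : ∀ s ∈ grade 0, ∃ c ∈ grade 0, σ s = s ^ p + (p : S) * c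
  σ_t : σ t = (p : S)
  p_jac : ∀ x ∈ grade 0, ∃ y ∈ grade 0, (1 - (p : S) * x) * y = 1

variable {p : ℕ} {S : Type} [CommRing S]

/-- The degree zero subring S₀ of a frame. -/
def Frame.S0 (F : Frame p S) : Subring S where
  carrier := F.grade 0
  mul_mem' {a b} ha hb := by simpa using F.mul_mem ha hb
  one_mem' := F.one_mem
  add_mem' {a b} ha hb := add_mem ha hb
  zero_mem' := zero_mem _
  neg_mem' {a} ha := neg_mem ha

/-- The ideal tS₁ ⊆ S₀. -/
def Frame.tS1 (F : Frame p S) : Ideal F.S0 where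
  carrier := {a | ∃ x ∈ F.grade 1, (a : S) = F.t * x}
  add_mem' := by
    rintro a b ⟨x, hx, hax⟩ ⟨y, hy, hby⟩
    exact ⟨x + y, add_mem hx hy, by push_cast [hax, hby]; ring⟩
  zero_mem' := ⟨0, zero_mem _, by simp⟩
  smul_mem' := by
    rintro c a ⟨x, hx, hax⟩
    refine ⟨(c : S) * x, by simpa using F.mul_mem c.2 hx, ?_⟩
    show ((c * a : F.S0) : S) = _
    push_cast [hax]; ring

/-- The ring R = S₀/tS₁ of a frame. -/
abbrev Frame.R (F : Frame p S) : Type := F.S0 ⧸ F.tS1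

/-- The kernel of ρ : S → R, the graded ideal with K₀ = tS₁ and Kₙ = Sₙ for n ≠ 0. -/
def Frame.kerRho (F : Frame p S) : Ideal S :=
  Ideal.span ({s : S | ∃ x ∈ F.grade 1, s = F.t * x} ∪ ⋃ (n : ℤ) (_ : n ≠ 0), (F.grade n : Set S))


noncomputable section Zip

open Polynomial

variable (p : ℕ) [hp : Fact p.Prime] (R : Type) [CommRing R] [CharP R p]

/-- The underlying ring of the zip frame of an `𝔽_p`-algebra `R`, realized as the fiber
product `R[t] ×_{Frob,R} R[u] = {(f,g) | f(0)^p = g(0)}`. -/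
def zipSubring : Subring (Polynomial R × Polynomial R) where
  carrier := {x | x.1.coeff 0 ^ p = x.2.coeff 0}
  one_mem' := by simp
  mul_mem' := by
    rintro x y hx hy
    simp only [Set.mem_setOf_eq, Prod.fst_mul, Prod.snd_mul, Polynomial.mul_coeff_zero,
      mul_pow] at *
    rw [hx, hy]
  add_mem' := by
    rintro x y hx hy
    simp only [Set.mem_setOf_eq, Prod.fst_add, Prod.snd_add, Polynomial.coeff_add] at *
    rw [add_pow_char, hx, hy]
  zero_mem' := by
    simp [zero_pow hp.out.ne_zero]
  neg_mem' := by
    rintro x hx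
    simp only [Set.mem_setOf_eq, Prod.fst_neg, Prod.snd_neg, Polynomial.coeff_neg] at *
    rw [neg_pow, neg_one_pow_char, hx]; ring

/-- The grading of the zip frame: the degree `n` part consists of the pairs `(a tⁿ, 0)` for
`n < 0` (where `t` is the first variable), of the pairs `(a, a^p)` for `n = 0`, and of the
pairs `(0, a uⁿ)` for `n > 0` (where `u` is the second variable); in each case the part is
a copy of `R` as an abelian group. -/
def zipGrade (n : ℤ) : AddSubgroup (zipSubring p R) where
  carrier := {x | ∃ a : R, (x : Polynomial R × Polynomial R) =
      if n < 0 then (Polynomial.C a * Polynomial.X ^ (-n).toNat, 0)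
      else if n = 0 then (Polynomial.C a, Polynomial.C (a ^ p))
      else (0, Polynomial.C a * Polynomial.X ^ n.toNat)}
  zero_mem' := ⟨0, by split_ifs <;> simp [zero_pow hp.out.ne_zero] <;> rfl⟩
  add_mem' := by
    rintro x y ⟨a, ha⟩ ⟨b, hb⟩
    refine ⟨a + b, ?_⟩
    have hxy : ((x + y : zipSubring p R) : Polynomial R × Polynomial R)
        = (x : Polynomial R × Polynomial R) + (y : Polynomial R × Polynomial R) := rfl
    rw [hxy, ha, hb]
    split_ifs with h1 h2
    · simp [Prod.ext_iff, add_mul]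
    · simp [Prod.ext_iff, add_pow_char]
    · simp [Prod.ext_iff, add_mul]
  neg_mem' := by
    rintro x ⟨a, ha⟩
    refine ⟨-a, ?_⟩
    have hnegpow : (-a) ^ p = -(a ^ p) := by
      rw [neg_pow, neg_one_pow_char, neg_one_mul]
    have hx : ((-x : zipSubring p R) : Polynomial R × Polynomial R)
        = -(x : Polynomial R × Polynomial R) := rfl
    rw [hx, ha]
    split_ifs with h1 h2
    · simp [Prod.ext_iff, neg_mul]
    · simp [Prod.ext_iff, hnegpow]
    · simp [Prod.ext_iff, neg_mul]

/-- The embedding `R ≅ T₀ ⊆ T`, `a ↦ (a, a^p)`. -/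
def zipIota : R →+* zipSubring p R :=
  (RingHom.prod (Polynomial.C) ((Polynomial.C).comp (frobenius R p))).codRestrict
    (zipSubring p R) (fun a => by
      show (Polynomial.C a).coeff 0 ^ p = (Polynomial.C (frobenius R p a)).coeff 0
      simp only [frobenius_def, Polynomial.coeff_C_zero])

lemma coe_zipIota (a : R) :
    ((zipIota p R a : zipSubring p R) : Polynomial R × Polynomial R)
      = (Polynomial.C a, Polynomial.C (a ^ p)) := by
  rw [show ((zipIota p R a : zipSubring p R) : Polynomial R × Polynomial R)
      = (Polynomial.C a, Polynomial.C (frobenius R p a)) from rfl, frobenius_def]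

lemma zipIota_mem_zero (a : R) : zipIota p R a ∈ zipGrade p R 0 :=
  ⟨a, by rw [coe_zipIota]; norm_num⟩

/-- `τ : T → T₀ ⊆ T` is given by `(f, g) ↦ f(1)`. -/
def zipTau : zipSubring p R →+* zipSubring p R :=
  (zipIota p R).comp ((Polynomial.evalRingHom (1 : R)).comp
    ((RingHom.fst (Polynomial R) (Polynomial R)).comp (zipSubring p R).subtype))

/-- `σ : T → T₀ ⊆ T` is given by `(f, g) ↦ g(1)`. -/
def zipSigma : zipSubring p R →+* zipSubring p R :=
  (zipIota p R).comp ((Polynomial.evalRingHom (1 : R)).comp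
    ((RingHom.snd (Polynomial R) (Polynomial R)).comp (zipSubring p R).subtype))

lemma zipTau_apply (x : zipSubring p R) :
    zipTau p R x = zipIota p R ((x : Polynomial R × Polynomial R).1.eval 1) := rfl

lemma zipSigma_apply (x : zipSubring p R) :
    zipSigma p R x = zipIota p R ((x : Polynomial R × Polynomial R).2.eval 1) := rfl

/-- The element `t = (X, 0)` of the zip frame. -/
def zipT : zipSubring p R :=
  ⟨(Polynomial.X, 0), by
    show (Polynomial.X : Polynomial R).coeff 0 ^ p = (0 : Polynomial R).coeff 0
    simp [zero_pow hp.out.ne_zero]⟩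

lemma zip_charP : ((p : ℕ) : zipSubring p R) = 0 :=
  Subtype.ext (Prod.ext (CharP.cast_eq_zero (Polynomial R) p) (CharP.cast_eq_zero (Polynomial R) p))

/-- The projection `T → R` identifying `T₀ = T₀/tT₁` with `R`. -/
def zipPi : zipSubring p R →+* R :=
  (Polynomial.evalRingHom (1 : R)).comp
    ((RingHom.fst (Polynomial R) (Polynomial R)).comp (zipSubring p R).subtype)

/-- The degree-`n` coordinate of an element of the zip ring. -/
def zipCoord (n : ℤ) : zipSubring p R →+ R where
  toFun x := if n ≤ 0 then (x : Polynomial R × Polynomial R).1.coeff (-n).toNat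
    else (x : Polynomial R × Polynomial R).2.coeff n.toNat
  map_zero' := by split_ifs <;> simp
  map_add' := by
    intro x y
    have h : ((x + y : zipSubring p R) : Polynomial R × Polynomial R)
        = (x : Polynomial R × Polynomial R) + (y : Polynomial R × Polynomial R) := rfl
    split_ifs <;> simp [h]

lemma zipCoord_eq_zero_of_ne {m n : ℤ} (hmn : m ≠ n) {x : zipSubring p R}
    (hx : x ∈ zipGrade p R m) : zipCoord p R n x = 0 := by
  obtain ⟨a, ha⟩ := hx
  show (if n ≤ 0 then (x : Polynomial R × Polynomial R).1.coeff (-n).toNat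
    else (x : Polynomial R × Polynomial R).2.coeff n.toNat) = 0
  split_ifs at ha with h2 h3
  · rw [ha]
    split_ifs with h1
    · rw [Polynomial.coeff_C_mul, Polynomial.coeff_X_pow,
        if_neg (by omega : ¬ (-n).toNat = (-m).toNat), mul_zero]
    · simp
  · rw [ha]
    split_ifs with h1
    · rw [Polynomial.coeff_C, if_neg (by omega : ¬ (-n).toNat = 0)]
    · rw [Polynomial.coeff_C, if_neg (by omega : ¬ n.toNat = 0)]
  · rw [ha]
    split_ifs with h1
    · simp
    · rw [Polynomial.coeff_C_mul, Polynomial.coeff_X_pow,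
        if_neg (by omega : ¬ n.toNat = m.toNat), mul_zero]

lemma eq_zero_of_zipCoord_eq_zero {n : ℤ} {x : zipSubring p R}
    (hx : x ∈ zipGrade p R n) (h : zipCoord p R n x = 0) : x = 0 := by
  obtain ⟨a, ha⟩ := hx
  have hshow : zipCoord p R n x
      = (if n ≤ 0 then (x : Polynomial R × Polynomial R).1.coeff (-n).toNat
        else (x : Polynomial R × Polynomial R).2.coeff n.toNat) := rfl
  split_ifs at ha with h2 h3
  · have hcoord : zipCoord p R n x = a := by
      rw [hshow, if_pos (by omega : n ≤ 0), ha, Polynomial.coeff_C_mul,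
        Polynomial.coeff_X_pow, if_pos rfl, mul_one]
    rw [hcoord] at h
    subst h
    apply Subtype.ext
    rw [ha]
    simp
  · have hcoord : zipCoord p R n x = a := by
      rw [hshow, if_pos (by omega : n ≤ 0), ha]
      have ht : (-n).toNat = 0 := by omega
      rw [ht, Polynomial.coeff_C_zero]
    rw [hcoord] at h
    subst h
    apply Subtype.ext
    rw [ha]
    simp [zero_pow hp.out.ne_zero]
  · have hcoord : zipCoord p R n x = a := by
      rw [hshow, if_neg (by omega : ¬ n ≤ 0), ha, Polynomial.coeff_C_mul,
        Polynomial.coeff_X_pow, if_pos rfl, mul_one]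
    rw [hcoord] at h
    subst h
    apply Subtype.ext
    rw [ha]
    simp

lemma poly_decomp (f : Polynomial R) :
    Polynomial.C (f.coeff 0) + ∑ k ∈ f.support.erase 0,
      Polynomial.C (f.coeff k) * Polynomial.X ^ k = f := by
  conv_rhs => rw [f.as_sum_support]
  simp_rw [Polynomial.C_mul_X_pow_eq_monomial]
  by_cases h0 : 0 ∈ f.support
  · rw [← Finset.add_sum_erase _ _ h0, Polynomial.monomial_zero_left]
  · rw [Finset.erase_eq_of_notMem h0, Polynomial.notMem_support_iff.mp h0, map_zero,
      zero_add]

set_option maxHeartbeats 2000000 in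
/-- The grading of the zip frame is an internal direct sum decomposition. -/
lemma zipGrade_isInternal : DirectSum.IsInternal (zipGrade p R) := by
  classical
  constructor
  · -- injectivity
    rw [injective_iff_map_eq_zero]
    intro v hv
    refine DFinsupp.ext fun n => ?_
    have hsum : ∑ i ∈ DFinsupp.support v, ((v i : zipSubring p R)) = 0 := by
      have h1 := congrArg (DirectSum.coeAddMonoidHom (zipGrade p R))
        (DirectSum.sum_support_of v)
      rw [map_sum] at h1
      simp only [DirectSum.coeAddMonoidHom_of] at h1
      rw [h1, hv]
    have hcoord : zipCoord p R n ((v n : zipSubring p R)) = 0 := by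
      have happ := congrArg (zipCoord p R n) hsum
      rw [map_sum, map_zero] at happ
      by_cases hn : n ∈ DFinsupp.support v
      · rw [Finset.sum_eq_single_of_mem n hn
          (fun i _ hi => zipCoord_eq_zero_of_ne p R hi (v i).2)] at happ
        exact happ
      · rw [DFinsupp.notMem_support_iff.mp hn]
        simp
    have hzero := eq_zero_of_zipCoord_eq_zero p R (v n).2 hcoord
    simpa using hzero
  · -- surjectivity
    rintro ⟨⟨f, g⟩, hfg⟩
    have hfg' : f.coeff 0 ^ p = g.coeff 0 := hfg
    have hmemneg : ∀ k ∈ f.support.erase 0,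
        ((Polynomial.C (f.coeff k) * Polynomial.X ^ k, 0) : Polynomial R × Polynomial R)
          ∈ zipSubring p R := by
      intro k hk
      have hk0 : k ≠ 0 := Finset.ne_of_mem_erase hk
      have hc : (Polynomial.C (f.coeff k) * Polynomial.X ^ k).coeff 0 ^ p
          = (0 : Polynomial R).coeff 0 := by
        rw [Polynomial.coeff_C_mul, Polynomial.coeff_X_pow, if_neg (by omega : ¬ 0 = k)]
        simp [zero_pow hp.out.ne_zero]
      exact hc
    have hmempos : ∀ k ∈ g.support.erase 0,
        ((0, Polynomial.C (g.coeff k) * Polynomial.X ^ k) : Polynomial R × Polynomial R)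
          ∈ zipSubring p R := by
      intro k hk
      have hk0 : k ≠ 0 := Finset.ne_of_mem_erase hk
      have hc : ((0 : Polynomial R)).coeff 0 ^ p
          = (Polynomial.C (g.coeff k) * Polynomial.X ^ k).coeff 0 := by
        rw [Polynomial.coeff_C_mul, Polynomial.coeff_X_pow, if_neg (by omega : ¬ 0 = k)]
        simp [zero_pow hp.out.ne_zero]
      exact hc
    have hgradeneg : ∀ (k : {y // y ∈ f.support.erase 0}),
        (⟨_, hmemneg k.1 k.2⟩ : zipSubring p R) ∈ zipGrade p R (-(k.1 : ℤ)) := by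
      intro k
      have hk0 : k.1 ≠ 0 := Finset.ne_of_mem_erase k.2
      refine ⟨f.coeff k.1, ?_⟩
      rw [if_pos (by omega : -((k.1 : ℕ) : ℤ) < 0)]
      have ht : (-(-((k.1 : ℕ) : ℤ))).toNat = (k.1 : ℕ) := by omega
      rw [ht]
    have hgradepos : ∀ (k : {y // y ∈ g.support.erase 0}),
        (⟨_, hmempos k.1 k.2⟩ : zipSubring p R) ∈ zipGrade p R ((k.1 : ℤ)) := by
      intro k
      have hk0 : k.1 ≠ 0 := Finset.ne_of_mem_erase k.2
      refine ⟨g.coeff k.1, ?_⟩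
      rw [if_neg (by omega : ¬ ((k.1 : ℕ) : ℤ) < 0),
        if_neg (by omega : ¬ ((k.1 : ℕ) : ℤ) = 0)]
      have ht : (((k.1 : ℕ) : ℤ)).toNat = (k.1 : ℕ) := by omega
      rw [ht]
    have hEx : (⟨(f, g), hfg⟩ : zipSubring p R)
        = zipIota p R (f.coeff 0)
          + ∑ k ∈ (f.support.erase 0).attach,
              (⟨(Polynomial.C (f.coeff k.1) * Polynomial.X ^ (k.1 : ℕ), 0),
                hmemneg k.1 k.2⟩ : zipSubring p R)
          + ∑ k ∈ (g.support.erase 0).attach,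
              (⟨(0, Polynomial.C (g.coeff k.1) * Polynomial.X ^ (k.1 : ℕ)),
                hmempos k.1 k.2⟩ : zipSubring p R) := by
      apply Subtype.ext
      push_cast [AddSubmonoidClass.coe_finset_sum, Finset.sum_attach, coe_zipIota]
      apply Prod.ext
      · simp only [Prod.fst_add, Prod.fst_sum, Finset.sum_const_zero, add_zero]
        rw [Finset.sum_attach (f.support.erase 0)
          (fun k => Polynomial.C (f.coeff k) * Polynomial.X ^ k)]
        exact (poly_decomp R f).symm
      · simp only [Prod.snd_add, Prod.snd_sum, Finset.sum_const_zero, add_zero, zero_add]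
        rw [Finset.sum_attach (g.support.erase 0)
          (fun k => Polynomial.C (g.coeff k) * Polynomial.X ^ k), hfg']
        exact (poly_decomp R g).symm
    refine ⟨DirectSum.of (fun n => (zipGrade p R n)) 0
        ⟨zipIota p R (f.coeff 0), zipIota_mem_zero p R _⟩
      + ∑ k ∈ (f.support.erase 0).attach,
          DirectSum.of (fun n => (zipGrade p R n)) (-(k.1 : ℤ)) ⟨_, hgradeneg k⟩
      + ∑ k ∈ (g.support.erase 0).attach,
          DirectSum.of (fun n => (zipGrade p R n)) ((k.1 : ℤ)) ⟨_, hgradepos k⟩, ?_⟩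
    rw [map_add, map_add, map_sum, map_sum]
    simp only [DirectSum.coeAddMonoidHom_of]
    exact hEx.symm

/-- The zip frame `𝕎₁(R)` of an `𝔽_p`-algebra `R`. -/
def zipFrame : Frame p (zipSubring p R) where
  grade := zipGrade p R
  one_mem := ⟨1, by norm_num <;> rfl⟩
  mul_mem := by
    rintro m n x y ⟨a, ha⟩ ⟨b, hb⟩
    have hxy : ((x * y : zipSubring p R) : Polynomial R × Polynomial R)
        = (x : Polynomial R × Polynomial R) * (y : Polynomial R × Polynomial R) := rfl
    rcases lt_trichotomy m 0 with hm | hm | hm <;> rcases lt_trichotomy n 0 with hn | hn | hn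
    · -- m < 0, n < 0
      refine ⟨a * b, ?_⟩
      rw [hxy, ha, hb, if_pos hm, if_pos hn, if_pos (show m + n < 0 by omega)]
      have htn : (-(m + n)).toNat = (-m).toNat + (-n).toNat := by omega
      rw [htn]
      apply Prod.ext <;> simp [pow_add] <;> ring
    · -- m < 0, n = 0
      subst hn
      refine ⟨a * b, ?_⟩
      rw [hxy, ha, hb, if_pos hm, if_neg (show ¬ (0:ℤ) < 0 by omega),
        if_pos (rfl : (0:ℤ) = 0), if_pos (show m + 0 < 0 by omega)]
      have htn : (-(m + 0)).toNat = (-m).toNat := by omega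
      rw [htn]
      apply Prod.ext <;> simp <;> ring
    · -- m < 0 < n : the product vanishes
      refine ⟨0, ?_⟩
      rw [hxy, ha, hb, if_pos hm, if_neg (show ¬ n < 0 by omega),
        if_neg (show ¬ n = 0 by omega)]
      split_ifs <;> apply Prod.ext <;> simp [zero_pow hp.out.ne_zero]
    · -- m = 0, n < 0
      subst hm
      refine ⟨a * b, ?_⟩
      rw [hxy, ha, hb, if_pos hn, if_neg (show ¬ (0:ℤ) < 0 by omega),
        if_pos (rfl : (0:ℤ) = 0), if_pos (show (0:ℤ) + n < 0 by omega)]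
      have htn : (-((0:ℤ) + n)).toNat = (-n).toNat := by omega
      rw [htn]
      apply Prod.ext <;> simp <;> ring
    · -- m = 0, n = 0
      subst hm; subst hn
      refine ⟨a * b, ?_⟩
      rw [hxy, ha, hb, if_neg (show ¬ (0:ℤ) < 0 by omega), if_pos (rfl : (0:ℤ) = 0),
        if_neg (show ¬ (0:ℤ) + 0 < 0 by omega), if_pos (show (0:ℤ) + 0 = 0 by omega)]
      apply Prod.ext <;> simp [mul_pow]
    · -- m = 0 < n
      subst hm
      refine ⟨a ^ p * b, ?_⟩
      rw [hxy, ha, hb, if_neg (show ¬ (0:ℤ) < 0 by omega), if_pos (rfl : (0:ℤ) = 0),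
        if_neg (show ¬ n < 0 by omega), if_neg (show ¬ n = 0 by omega),
        if_neg (show ¬ (0:ℤ) + n < 0 by omega), if_neg (show ¬ (0:ℤ) + n = 0 by omega)]
      have htn : ((0:ℤ) + n).toNat = n.toNat := by omega
      rw [htn]
      apply Prod.ext <;> simp <;> ring
    · -- n < 0 < m : the product vanishes
      refine ⟨0, ?_⟩
      rw [hxy, ha, hb, if_pos hn, if_neg (show ¬ m < 0 by omega),
        if_neg (show ¬ m = 0 by omega)]
      split_ifs <;> apply Prod.ext <;> simp [zero_pow hp.out.ne_zero]
    · -- n = 0 < m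
      subst hn
      refine ⟨a * b ^ p, ?_⟩
      rw [hxy, ha, hb, if_neg (show ¬ m < 0 by omega), if_neg (show ¬ m = 0 by omega),
        if_neg (show ¬ (0:ℤ) < 0 by omega), if_pos (rfl : (0:ℤ) = 0),
        if_neg (show ¬ m + 0 < 0 by omega), if_neg (show ¬ m + 0 = 0 by omega)]
      have htn : (m + 0).toNat = m.toNat := by omega
      rw [htn]
      apply Prod.ext <;> simp <;> ring
    · -- 0 < m, 0 < n
      refine ⟨a * b, ?_⟩
      rw [hxy, ha, hb, if_neg (show ¬ m < 0 by omega), if_neg (show ¬ m = 0 by omega),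
        if_neg (show ¬ n < 0 by omega), if_neg (show ¬ n = 0 by omega),
        if_neg (show ¬ m + n < 0 by omega), if_neg (show ¬ m + n = 0 by omega)]
      have htn : (m + n).toNat = m.toNat + n.toNat := by omega
      rw [htn]
      apply Prod.ext <;> simp [pow_add] <;> ring
  isInternal := zipGrade_isInternal p R
  σ := zipSigma p R
  τ := zipTau p R
  σ_mem := fun _ => zipIota_mem_zero p R _
  τ_mem := fun _ => zipIota_mem_zero p R _
  τ_id := by
    rintro s ⟨a, ha⟩
    norm_num at ha
    apply Subtype.ext
    rw [zipTau_apply, ha, coe_zipIota]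
    simp
  τ_bij := by
    intro n hn
    have hkey : ∀ x : zipSubring p R, x ∈ zipGrade p R (-(n : ℤ)) →
        ∃ a : R, (x : Polynomial R × Polynomial R)
          = (Polynomial.C a * Polynomial.X ^ n, 0) := by
      rintro x ⟨a, ha⟩
      refine ⟨a, ?_⟩
      rw [ha, if_pos (by omega : -(n : ℤ) < 0)]
      have : (-(-(n : ℤ))).toNat = n := by omega
      rw [this]
    refine ⟨?_, ?_, ?_⟩
    · rintro x hx
      obtain ⟨a, ha⟩ := hkey x hx
      refine ⟨a, ?_⟩
      rw [zipTau_apply, ha, coe_zipIota]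
      norm_num
    · rintro x hx y hy hxy
      obtain ⟨a, ha⟩ := hkey x hx
      obtain ⟨b, hb⟩ := hkey y hy
      simp only [zipTau_apply, ha, hb] at hxy
      norm_num at hxy
      have h2 := congrArg
        (fun z : zipSubring p R => ((z : Polynomial R × Polynomial R).1).coeff 0) hxy
      simp only [coe_zipIota, Polynomial.coeff_C_zero] at h2
      apply Subtype.ext
      rw [ha, hb, h2]
    · rintro y ⟨b, hb⟩
      norm_num at hb
      have hmem : ((Polynomial.C b * Polynomial.X ^ n, 0) : Polynomial R × Polynomial R)
          ∈ zipSubring p R := by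
        have hcoeff : (Polynomial.C b * Polynomial.X ^ n).coeff 0 ^ p
            = (0 : Polynomial R).coeff 0 := by
          rw [Polynomial.coeff_C_mul, Polynomial.coeff_X_pow,
            if_neg (by omega : ¬ (0 : ℕ) = n)]
          simp [zero_pow hp.out.ne_zero]
        exact hcoeff
      refine ⟨⟨_, hmem⟩, ⟨b, ?_⟩, ?_⟩
      · rw [if_pos (by omega : -(n : ℤ) < 0)]
        have : (-(-(n : ℤ))).toNat = n := by omega
        rw [this]
      · apply Subtype.ext
        rw [zipTau_apply]
        show ((zipIota p R ((Polynomial.C b * Polynomial.X ^ n).eval 1) : zipSubring p R)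
          : Polynomial R × Polynomial R) = (y : Polynomial R × Polynomial R)
        rw [hb]
        norm_num [coe_zipIota]
  t := zipT p R
  t_mem := ⟨1, by
    rw [if_pos (by norm_num : (-1 : ℤ) < 0)]
    show ((Polynomial.X, 0) : Polynomial R × Polynomial R) = _
    norm_num⟩
  τ_t := by
    apply Subtype.ext
    rw [zipTau_apply]
    show ((zipIota p R ((zipT p R : Polynomial R × Polynomial R).1.eval 1) : zipSubring p R)
      : Polynomial R × Polynomial R) = ((1 : zipSubring p R) : Polynomial R × Polynomial R)
    norm_num [zipT, coe_zipIota]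
  σ_frob := by
    rintro s ⟨a, ha⟩
    norm_num at ha
    refine ⟨0, zero_mem _, ?_⟩
    have h0 : ((p : ℕ) : zipSubring p R) * 0 = 0 := by ring
    rw [h0, add_zero]
    apply Subtype.ext
    have hsp : ((s ^ p : zipSubring p R) : Polynomial R × Polynomial R)
        = (s : Polynomial R × Polynomial R) ^ p := rfl
    rw [zipSigma_apply, ha, coe_zipIota, hsp, ha]
    norm_num [Prod.ext_iff, Prod.pow_fst, Prod.pow_snd, ← map_pow]
  σ_t := by
    apply Subtype.ext
    rw [zipSigma_apply, zip_charP]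
    show ((zipIota p R ((zipT p R : Polynomial R × Polynomial R).2.eval 1) : zipSubring p R)
      : Polynomial R × Polynomial R) = ((0 : zipSubring p R) : Polynomial R × Polynomial R)
    norm_num [zipT, coe_zipIota, zero_pow hp.out.ne_zero]
  p_jac := by
    intro x hx
    refine ⟨1, ⟨1, by norm_num <;> rfl⟩, ?_⟩
    rw [zip_charP]
    ring


/-! ### Auxiliary lemmas for the finality theorem -/

lemma zipIota_injective : Function.Injective (zipIota p R) := by
  intro a b h
  have h2 := congrArg (fun x : zipSubring p R =>
    (x : Polynomial R × Polynomial R).1.coeff 0) h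
  simpa [coe_zipIota] using h2

/-- The element `(C c · X^k, 0)` of the zip ring, for `k ≥ 1`. -/
def zipNeg (c : R) (k : ℕ) (hk : 1 ≤ k) : zipSubring p R :=
  ⟨(Polynomial.C c * Polynomial.X ^ k, 0), by
    have hc : (Polynomial.C c * Polynomial.X ^ k).coeff 0 ^ p
        = (0 : Polynomial R).coeff 0 := by
      rw [Polynomial.coeff_C_mul, Polynomial.coeff_X_pow, if_neg (by omega : ¬ (0:ℕ) = k),
        mul_zero, zero_pow hp.out.ne_zero, Polynomial.coeff_zero]
    exact hc⟩

/-- The element `(0, C c · X^k)` of the zip ring, for `k ≥ 1`. -/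
def zipPos (c : R) (k : ℕ) (hk : 1 ≤ k) : zipSubring p R :=
  ⟨(0, Polynomial.C c * Polynomial.X ^ k), by
    have hc : ((0 : Polynomial R)).coeff 0 ^ p
        = (Polynomial.C c * Polynomial.X ^ k).coeff 0 := by
      rw [Polynomial.coeff_C_mul, Polynomial.coeff_X_pow, if_neg (by omega : ¬ (0:ℕ) = k),
        mul_zero, Polynomial.coeff_zero, zero_pow hp.out.ne_zero]
    exact hc⟩

lemma coe_zipNeg (c : R) (k : ℕ) (hk : 1 ≤ k) :
    ((zipNeg p R c k hk : zipSubring p R) : Polynomial R × Polynomial R)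
      = (Polynomial.C c * Polynomial.X ^ k, 0) := rfl

lemma coe_zipPos (c : R) (k : ℕ) (hk : 1 ≤ k) :
    ((zipPos p R c k hk : zipSubring p R) : Polynomial R × Polynomial R)
      = (0, Polynomial.C c * Polynomial.X ^ k) := rfl

lemma zipNeg_mem (c : R) (k : ℕ) (hk : 1 ≤ k) :
    zipNeg p R c k hk ∈ zipGrade p R (-(k : ℤ)) := by
  refine ⟨c, ?_⟩
  rw [if_pos (by omega : -(k:ℤ) < 0)]
  have h : (-(-(k:ℤ))).toNat = k := by omega
  rw [h, coe_zipNeg]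

lemma zipPos_mem (c : R) (k : ℕ) (hk : 1 ≤ k) :
    zipPos p R c k hk ∈ zipGrade p R (k : ℤ) := by
  refine ⟨c, ?_⟩
  rw [if_neg (by omega : ¬ (k:ℤ) < 0), if_neg (by omega : ¬ (k:ℤ) = 0)]
  have h : ((k:ℤ)).toNat = k := by omega
  rw [h, coe_zipPos]

lemma zipNeg_congr (c : R) {k l : ℕ} (hkl : k = l) (hk : 1 ≤ k) (hl : 1 ≤ l) :
    zipNeg p R c k hk = zipNeg p R c l hl := by subst hkl; rfl

lemma zipPos_congr (c : R) {k l : ℕ} (hkl : k = l) (hk : 1 ≤ k) (hl : 1 ≤ l) :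
    zipPos p R c k hk = zipPos p R c l hl := by subst hkl; rfl

lemma zipNeg_zero (k : ℕ) (hk : 1 ≤ k) : zipNeg p R 0 k hk = 0 :=
  Subtype.ext (by simp [zipNeg, Prod.ext_iff])

lemma zipPos_zero (k : ℕ) (hk : 1 ≤ k) : zipPos p R 0 k hk = 0 :=
  Subtype.ext (by simp [zipPos, Prod.ext_iff])

lemma zipNeg_add (c d : R) (k : ℕ) (hk : 1 ≤ k) :
    zipNeg p R (c + d) k hk = zipNeg p R c k hk + zipNeg p R d k hk :=
  Subtype.ext (by simp [zipNeg, Prod.ext_iff, add_mul])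

lemma zipPos_add (c d : R) (k : ℕ) (hk : 1 ≤ k) :
    zipPos p R (c + d) k hk = zipPos p R c k hk + zipPos p R d k hk :=
  Subtype.ext (by simp [zipPos, Prod.ext_iff, add_mul])

lemma zipNeg_mul (c d : R) (k l : ℕ) (hk : 1 ≤ k) (hl : 1 ≤ l) :
    zipNeg p R c k hk * zipNeg p R d l hl = zipNeg p R (c * d) (k + l) (by omega) :=
  Subtype.ext (by simp [zipNeg, Prod.ext_iff, pow_add]; ring)

lemma zipPos_mul (c d : R) (k l : ℕ) (hk : 1 ≤ k) (hl : 1 ≤ l) :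
    zipPos p R c k hk * zipPos p R d l hl = zipPos p R (c * d) (k + l) (by omega) :=
  Subtype.ext (by simp [zipPos, Prod.ext_iff, pow_add]; ring)

lemma zipIota_mul_zipNeg (a c : R) (k : ℕ) (hk : 1 ≤ k) :
    zipIota p R a * zipNeg p R c k hk = zipNeg p R (a * c) k hk := by
  apply Subtype.ext
  have h : ((zipIota p R a * zipNeg p R c k hk : zipSubring p R)
      : Polynomial R × Polynomial R)
      = ((zipIota p R a : zipSubring p R) : Polynomial R × Polynomial R)
        * ((zipNeg p R c k hk : zipSubring p R) : Polynomial R × Polynomial R) := rfl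
  rw [h, coe_zipIota, coe_zipNeg, coe_zipNeg]
  simp [Prod.ext_iff]; ring

lemma zipIota_mul_zipPos (a c : R) (k : ℕ) (hk : 1 ≤ k) :
    zipIota p R a * zipPos p R c k hk = zipPos p R (a ^ p * c) k hk := by
  apply Subtype.ext
  have h : ((zipIota p R a * zipPos p R c k hk : zipSubring p R)
      : Polynomial R × Polynomial R)
      = ((zipIota p R a : zipSubring p R) : Polynomial R × Polynomial R)
        * ((zipPos p R c k hk : zipSubring p R) : Polynomial R × Polynomial R) := rfl
  rw [h, coe_zipIota, coe_zipPos, coe_zipPos]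
  simp [Prod.ext_iff]; ring

lemma zipNeg_mul_zipPos (c d : R) (k l : ℕ) (hk : 1 ≤ k) (hl : 1 ≤ l) :
    zipNeg p R c k hk * zipPos p R d l hl = 0 := by
  apply Subtype.ext
  have h : ((zipNeg p R c k hk * zipPos p R d l hl : zipSubring p R)
      : Polynomial R × Polynomial R)
      = ((zipNeg p R c k hk : zipSubring p R) : Polynomial R × Polynomial R)
        * ((zipPos p R d l hl : zipSubring p R) : Polynomial R × Polynomial R) := rfl
  rw [h, coe_zipNeg, coe_zipPos]
  simp [Prod.ext_iff]

lemma zipTau_zipIota (a : R) : zipTau p R (zipIota p R a) = zipIota p R a := by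
  rw [zipTau_apply, coe_zipIota]
  norm_num

lemma zipSigma_zipIota (a : R) : zipSigma p R (zipIota p R a) = zipIota p R (a ^ p) := by
  rw [zipSigma_apply, coe_zipIota]
  norm_num

lemma zipTau_zipNeg (c : R) (k : ℕ) (hk : 1 ≤ k) :
    zipTau p R (zipNeg p R c k hk) = zipIota p R c := by
  rw [zipTau_apply, coe_zipNeg]
  norm_num

lemma zipTau_zipPos (c : R) (k : ℕ) (hk : 1 ≤ k) :
    zipTau p R (zipPos p R c k hk) = 0 := by
  rw [zipTau_apply, coe_zipPos]
  norm_num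

lemma zipSigma_zipNeg (c : R) (k : ℕ) (hk : 1 ≤ k) :
    zipSigma p R (zipNeg p R c k hk) = 0 := by
  rw [zipSigma_apply, coe_zipNeg]
  norm_num

lemma zipSigma_zipPos (c : R) (k : ℕ) (hk : 1 ≤ k) :
    zipSigma p R (zipPos p R c k hk) = zipIota p R c := by
  rw [zipSigma_apply, coe_zipPos]
  norm_num

lemma zipPi_zipIota (a : R) : zipPi p R (zipIota p R a) = a := by
  show ((zipIota p R a : zipSubring p R) : Polynomial R × Polynomial R).1.eval 1 = a
  rw [coe_zipIota]
  norm_num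

lemma zipPi_zipNeg (c : R) (k : ℕ) (hk : 1 ≤ k) : zipPi p R (zipNeg p R c k hk) = c := by
  show ((zipNeg p R c k hk : zipSubring p R) : Polynomial R × Polynomial R).1.eval 1 = c
  rw [coe_zipNeg]
  norm_num

lemma zipPi_zipPos (c : R) (k : ℕ) (hk : 1 ≤ k) : zipPi p R (zipPos p R c k hk) = 0 := by
  show ((zipPos p R c k hk : zipSubring p R) : Polynomial R × Polynomial R).1.eval 1 = 0
  rw [coe_zipPos]
  norm_num

/-! ### Frame lemmas -/

lemma Frame.t_pow_mem (F : Frame p S) (n : ℕ) : F.t ^ n ∈ F.grade (-(n : ℤ)) := by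
  induction n with
  | zero => simpa using F.one_mem
  | succ k ih =>
      rw [pow_succ, show (-((k+1 : ℕ) : ℤ)) = -(k:ℤ) + (-1) from by push_cast; ring]
      exact F.mul_mem ih F.t_mem

lemma Frame.eq_t_pow_mul_tau (F : Frame p S) {n : ℕ} (hn : 1 ≤ n) {a : S}
    (ha : a ∈ F.grade (-(n : ℤ))) : a = F.t ^ n * F.τ a := by
  have hmem : F.t ^ n * F.τ a ∈ F.grade (-(n : ℤ)) := by
    have h := F.mul_mem (Frame.t_pow_mem p F n) (F.τ_mem a)
    simpa using h
  exact (F.τ_bij n hn).injOn ha hmem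
    (by rw [map_mul, map_pow, F.τ_t, one_pow, one_mul, F.τ_id _ (F.τ_mem a)])

lemma frame_pi_tau_pos (F : Frame p S) (π : S →+* R)
    (hπτ : ∀ s, π s = π (F.τ s))
    (hπker : ∀ a ∈ F.grade 0, (π a = 0 ↔ ∃ x ∈ F.grade 1, a = F.t * x))
    {j : ℤ} (hj : 0 < j) {b : S} (hb : b ∈ F.grade j) : π (F.τ b) = 0 := by
  set n : ℕ := j.toNat with hn
  have hb' : b ∈ F.grade ((n : ℕ) : ℤ) := by
    rw [show ((n : ℕ) : ℤ) = j from by omega]; exact hb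
  have hx : F.t ^ (n - 1) * b ∈ F.grade 1 := by
    have h := F.mul_mem (Frame.t_pow_mem p F (n - 1)) hb'
    rwa [show (-(((n-1) : ℕ) : ℤ)) + ((n : ℕ) : ℤ) = 1 from by omega] at h
  have hc : F.t ^ n * b ∈ F.grade 0 := by
    have h := F.mul_mem (Frame.t_pow_mem p F n) hb'
    rwa [show (-((n : ℕ) : ℤ)) + ((n : ℕ) : ℤ) = 0 from by ring] at h
  have h0 : π (F.t ^ n * b) = 0 := by
    refine (hπker _ hc).mpr ⟨F.t ^ (n - 1) * b, hx, ?_⟩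
    have ht : F.t ^ n = F.t * F.t ^ (n - 1) := by
      rw [← pow_succ']
      congr 1
      omega
    rw [ht, mul_assoc]
  have hτ : F.τ (F.t ^ n * b) = F.τ b := by
    rw [map_mul, map_pow, F.τ_t, one_pow, one_mul]
  calc π (F.τ b) = π (F.τ (F.t ^ n * b)) := by rw [hτ]
    _ = π (F.t ^ n * b) := (hπτ _).symm
    _ = 0 := h0

lemma frame_pi_sigma_neg (F : Frame p S) (π : S →+* R)
    {i : ℤ} (hi : i < 0) {a : S} (ha : a ∈ F.grade i) : π (F.σ a) = 0 := by
  set n : ℕ := (-i).toNat with hn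
  have ha' : a ∈ F.grade (-(n : ℤ)) := by
    rw [show (-(n : ℤ)) = i from by omega]; exact ha
  rw [Frame.eq_t_pow_mul_tau p F (by omega : 1 ≤ n) ha', map_mul, map_pow, F.σ_t, map_mul,
    map_pow, map_natCast, CharP.cast_eq_zero R p, zero_pow (by omega : n ≠ 0), zero_mul]

lemma frame_pi_sigma_zero (F : Frame p S) (π : S →+* R)
    {a : S} (ha : a ∈ F.grade 0) : π (F.σ a) = π a ^ p := by
  obtain ⟨c, _, hc⟩ := F.σ_frob a ha
  rw [hc, map_add, map_pow, map_mul, map_natCast, CharP.cast_eq_zero R p, zero_mul,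
    add_zero]

/-! ### The canonical maps `ψₙ : Sₙ → 𝕎₁(R)` -/

/-- The map `Sₙ → 𝕎₁(R)` given by `π₀ ∘ τ` in negative degrees, `π₀` in degree
zero and `π₀ ∘ σ` in positive degrees. -/
def framePsiFun (F : Frame p S) (π : S →+* R) (n : ℤ) (a : F.grade n) : zipSubring p R :=
  if h : n < 0 then zipNeg p R (π (F.τ (a : S))) (-n).toNat (by omega)
  else if h0 : n = 0 then zipIota p R (π (a : S))
  else zipPos p R (π (F.σ (a : S))) n.toNat (by omega)

lemma framePsiFun_of_neg (F : Frame p S) (π : S →+* R) {n : ℤ} (h : n < 0)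
    (a : F.grade n) :
    framePsiFun p R F π n a = zipNeg p R (π (F.τ (a : S))) (-n).toNat (by omega) :=
  dif_pos h

lemma framePsiFun_of_zero (F : Frame p S) (π : S →+* R) {n : ℤ} (h : n = 0)
    (a : F.grade n) :
    framePsiFun p R F π n a = zipIota p R (π (a : S)) :=
  (dif_neg (by omega)).trans (dif_pos h)

lemma framePsiFun_of_pos (F : Frame p S) (π : S →+* R) {n : ℤ} (h : 0 < n)
    (a : F.grade n) :
    framePsiFun p R F π n a = zipPos p R (π (F.σ (a : S))) n.toNat (by omega) :=
  (dif_neg (by omega)).trans (dif_neg (by omega))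

/-- The additive map `Sₙ → 𝕎₁(R)`. -/
def framePsi (F : Frame p S) (π : S →+* R) (n : ℤ) : F.grade n →+ zipSubring p R where
  toFun := framePsiFun p R F π n
  map_zero' := by
    show framePsiFun p R F π n 0 = 0
    rcases lt_trichotomy n 0 with h | h | h
    · rw [framePsiFun_of_neg p R F π h]
      have h1 : π (F.τ ((0 : F.grade n) : S)) = 0 := by
        rw [ZeroMemClass.coe_zero, map_zero, map_zero]
      rw [h1, zipNeg_zero]
    · rw [framePsiFun_of_zero p R F π h]
      rw [ZeroMemClass.coe_zero, map_zero, map_zero]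
    · rw [framePsiFun_of_pos p R F π h]
      have h1 : π (F.σ ((0 : F.grade n) : S)) = 0 := by
        rw [ZeroMemClass.coe_zero, map_zero, map_zero]
      rw [h1, zipPos_zero]
  map_add' a b := by
    show framePsiFun p R F π n (a + b)
      = framePsiFun p R F π n a + framePsiFun p R F π n b
    have hab : ((a + b : F.grade n) : S) = (a : S) + (b : S) := rfl
    rcases lt_trichotomy n 0 with h | h | h
    · rw [framePsiFun_of_neg p R F π h, framePsiFun_of_neg p R F π h a,
        framePsiFun_of_neg p R F π h b, hab, map_add, map_add, zipNeg_add]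
    · rw [framePsiFun_of_zero p R F π h, framePsiFun_of_zero p R F π h a,
        framePsiFun_of_zero p R F π h b, hab, map_add, map_add]
    · rw [framePsiFun_of_pos p R F π h, framePsiFun_of_pos p R F π h a,
        framePsiFun_of_pos p R F π h b, hab, map_add, map_add, zipPos_add]

lemma framePsi_of_neg (F : Frame p S) (π : S →+* R) {n : ℤ} (h : n < 0) (a : F.grade n) :
    framePsi p R F π n a = zipNeg p R (π (F.τ (a : S))) (-n).toNat (by omega) :=
  framePsiFun_of_neg p R F π h a

lemma framePsi_of_zero (F : Frame p S) (π : S →+* R) {n : ℤ} (h : n = 0) (a : F.grade n) :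
    framePsi p R F π n a = zipIota p R (π (a : S)) :=
  framePsiFun_of_zero p R F π h a

lemma framePsi_of_pos (F : Frame p S) (π : S →+* R) {n : ℤ} (h : 0 < n) (a : F.grade n) :
    framePsi p R F π n a = zipPos p R (π (F.σ (a : S))) n.toNat (by omega) :=
  framePsiFun_of_pos p R F π h a

lemma framePsi_mem (F : Frame p S) (π : S →+* R) (n : ℤ) (a : F.grade n) :
    framePsi p R F π n a ∈ zipGrade p R n := by
  rcases lt_trichotomy n 0 with h | h | h
  · rw [framePsi_of_neg p R F π h]
    have hm := zipNeg_mem p R (π (F.τ (a : S))) (-n).toNat (by omega)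
    rw [show zipGrade p R n = zipGrade p R (-(((-n).toNat : ℕ) : ℤ)) from by
      rw [show -(((-n).toNat : ℕ) : ℤ) = n from by omega]]
    exact hm
  · subst h
    rw [framePsi_of_zero p R F π rfl]
    exact zipIota_mem_zero p R _
  · rw [framePsi_of_pos p R F π h]
    have hm := zipPos_mem p R (π (F.σ (a : S))) n.toNat (by omega)
    rw [show zipGrade p R n = zipGrade p R ((n.toNat : ℕ) : ℤ) from by
      rw [show ((n.toNat : ℕ) : ℤ) = n from by omega]]
    exact hm

lemma framePsi_mul (F : Frame p S) (π : S →+* R)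
    (hπτ : ∀ s, π s = π (F.τ s))
    (hπker : ∀ a ∈ F.grade 0, (π a = 0 ↔ ∃ x ∈ F.grade 1, a = F.t * x))
    {i j : ℤ} (ai : F.grade i) (aj : F.grade j) (c : F.grade (i + j))
    (hc : (c : S) = (ai : S) * (aj : S)) :
    framePsi p R F π (i + j) c = framePsi p R F π i ai * framePsi p R F π j aj := by
  rcases lt_trichotomy i 0 with hi | hi | hi <;> rcases lt_trichotomy j 0 with hj | hj | hj
  · -- i < 0, j < 0
    rw [framePsi_of_neg p R F π (by omega : i + j < 0),
      framePsi_of_neg p R F π hi, framePsi_of_neg p R F π hj, zipNeg_mul]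
    have h1 : π (F.τ (c : S)) = π (F.τ (ai : S)) * π (F.τ (aj : S)) := by
      rw [hc, map_mul, map_mul]
    rw [h1]
    exact zipNeg_congr p R _ (by omega) _ _
  · -- i < 0, j = 0
    subst hj
    rw [framePsi_of_neg p R F π (by omega : i + 0 < 0),
      framePsi_of_neg p R F π hi, framePsi_of_zero p R F π rfl, mul_comm,
      zipIota_mul_zipNeg]
    have h1 : π (F.τ (c : S)) = π (aj : S) * π (F.τ (ai : S)) := by
      rw [hc, map_mul, map_mul, F.τ_id _ aj.2, mul_comm]
    rw [h1]
    exact zipNeg_congr p R _ (by omega) _ _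
  · -- i < 0 < j
    rw [framePsi_of_neg p R F π hi, framePsi_of_pos p R F π hj, zipNeg_mul_zipPos]
    have hτj : π (F.τ (aj : S)) = 0 := frame_pi_tau_pos p R F π hπτ hπker hj aj.2
    have hσi : π (F.σ (ai : S)) = 0 := frame_pi_sigma_neg p R F π hi ai.2
    rcases lt_trichotomy (i + j) 0 with hij | hij | hij
    · rw [framePsi_of_neg p R F π hij]
      have h1 : π (F.τ (c : S)) = 0 := by rw [hc, map_mul, map_mul, hτj, mul_zero]
      rw [h1, zipNeg_zero]
    · rw [framePsi_of_zero p R F π hij]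
      have h1 : π (c : S) = 0 := by rw [hπτ, hc, map_mul, map_mul, hτj, mul_zero]
      rw [h1, map_zero]
    · rw [framePsi_of_pos p R F π hij]
      have h1 : π (F.σ (c : S)) = 0 := by rw [hc, map_mul, map_mul, hσi, zero_mul]
      rw [h1, zipPos_zero]
  · -- i = 0, j < 0
    subst hi
    rw [framePsi_of_neg p R F π (by omega : (0:ℤ) + j < 0),
      framePsi_of_zero p R F π rfl, framePsi_of_neg p R F π hj, zipIota_mul_zipNeg]
    have h1 : π (F.τ (c : S)) = π (ai : S) * π (F.τ (aj : S)) := by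
      rw [hc, map_mul, map_mul, F.τ_id _ ai.2]
    rw [h1]
    exact zipNeg_congr p R _ (by omega) _ _
  · -- i = 0, j = 0
    subst hi; subst hj
    rw [framePsi_of_zero p R F π (by omega : (0:ℤ) + 0 = 0),
      framePsi_of_zero p R F π rfl ai, framePsi_of_zero p R F π rfl aj,
      ← map_mul, ← map_mul, hc]
  · -- i = 0 < j
    subst hi
    rw [framePsi_of_pos p R F π (by omega : (0:ℤ) < 0 + j),
      framePsi_of_zero p R F π rfl, framePsi_of_pos p R F π hj, zipIota_mul_zipPos]
    have h1 : π (F.σ (c : S)) = π (ai : S) ^ p * π (F.σ (aj : S)) := by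
      rw [hc, map_mul, map_mul, frame_pi_sigma_zero p R F π ai.2]
    rw [h1]
    exact zipPos_congr p R _ (by omega) _ _
  · -- j < 0 < i
    rw [framePsi_of_pos p R F π hi, framePsi_of_neg p R F π hj, mul_comm,
      zipNeg_mul_zipPos]
    have hτi : π (F.τ (ai : S)) = 0 := frame_pi_tau_pos p R F π hπτ hπker hi ai.2
    have hσj : π (F.σ (aj : S)) = 0 := frame_pi_sigma_neg p R F π hj aj.2
    rcases lt_trichotomy (i + j) 0 with hij | hij | hij
    · rw [framePsi_of_neg p R F π hij]
      have h1 : π (F.τ (c : S)) = 0 := by rw [hc, map_mul, map_mul, hτi, zero_mul]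
      rw [h1, zipNeg_zero]
    · rw [framePsi_of_zero p R F π hij]
      have h1 : π (c : S) = 0 := by rw [hπτ, hc, map_mul, map_mul, hτi, zero_mul]
      rw [h1, map_zero]
    · rw [framePsi_of_pos p R F π hij]
      have h1 : π (F.σ (c : S)) = 0 := by rw [hc, map_mul, map_mul, hσj, mul_zero]
      rw [h1, zipPos_zero]
  · -- j = 0 < i
    subst hj
    rw [framePsi_of_pos p R F π (by omega : (0:ℤ) < i + 0),
      framePsi_of_pos p R F π hi, framePsi_of_zero p R F π rfl, mul_comm,
      zipIota_mul_zipPos]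
    have h1 : π (F.σ (c : S)) = π (aj : S) ^ p * π (F.σ (ai : S)) := by
      rw [hc, map_mul, map_mul, frame_pi_sigma_zero p R F π aj.2, mul_comm]
    rw [h1]
    exact zipPos_congr p R _ (by omega) _ _
  · -- 0 < i, 0 < j
    rw [framePsi_of_pos p R F π (by omega : (0:ℤ) < i + j),
      framePsi_of_pos p R F π hi, framePsi_of_pos p R F π hj, zipPos_mul]
    have h1 : π (F.σ (c : S)) = π (F.σ (ai : S)) * π (F.σ (aj : S)) := by
      rw [hc, map_mul, map_mul]
    rw [h1]
    exact zipPos_congr p R _ (by omega) _ _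

/-- Let `R` be a commutative `𝔽_p`-algebra and `𝕎₁(R)` the zip frame of `R`.
Then `𝕎₁(R)` is a final object among frames for `R`: for every frame `(S, σ, τ)` for `R`
(the identification of `S₀/tS₁` with `R` being recorded by the ring homomorphism
`π : S → R`, which is the projection on `S₀` and satisfies `π = π ∘ τ`), there is a unique
homomorphism of frames `S → 𝕎₁(R)` inducing the identity of `R`, and it is assembled from
the maps `π₀ = π|_{S₀}`, `π₋ₙ = π₀ ∘ τ` and `πₙ = π₀ ∘ σ`. -/
theorem zipFrame_final (p : ℕ) [hp : Fact p.Prime] (R : Type) [CommRing R] [CharP R p]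
    {S : Type} [CommRing S] (F : Frame p S)
    (π : S →+* R)
    (hπτ : ∀ s, π s = π (F.τ s))
    (hπsurj : Function.Surjective π)
    (hπker : ∀ a ∈ F.grade 0, (π a = 0 ↔ ∃ x ∈ F.grade 1, a = F.t * x)) :
    (∃! φ : S →+* zipSubring p R,
      (∀ (n : ℤ), ∀ a ∈ F.grade n, φ a ∈ (zipFrame p R).grade n)
      ∧ (∀ s, φ (F.σ s) = (zipFrame p R).σ (φ s))
      ∧ (∀ s, φ (F.τ s) = (zipFrame p R).τ (φ s))
      ∧ (zipPi p R).comp φ = π)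
    ∧ (∀ φ : S →+* zipSubring p R,
      (∀ (n : ℤ), ∀ a ∈ F.grade n, φ a ∈ (zipFrame p R).grade n) →
      (∀ s, φ (F.σ s) = (zipFrame p R).σ (φ s)) →
      (∀ s, φ (F.τ s) = (zipFrame p R).τ (φ s)) →
      (zipPi p R).comp φ = π →
      ((∀ a ∈ F.grade 0, φ a = zipIota p R (π a))
        ∧ (∀ n : ℕ, 1 ≤ n → ∀ a ∈ F.grade (-(n : ℤ)),
            ((φ a : zipSubring p R) : Polynomial R × Polynomial R)
              = (Polynomial.C (π (F.τ a)) * Polynomial.X ^ n, 0))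
        ∧ (∀ n : ℕ, 1 ≤ n → ∀ a ∈ F.grade (n : ℤ),
            ((φ a : zipSubring p R) : Polynomial R × Polynomial R)
              = (0, Polynomial.C (π (F.σ a)) * Polynomial.X ^ n)))) := by
  classical
  letI gm : SetLike.GradedMonoid F.grade :=
    { one_mem := F.one_mem
      mul_mem := by
        intro i j gi gj hi hj
        exact F.mul_mem hi hj }
  letI : DirectSum.Decomposition F.grade := F.isInternal.chooseDecomposition
  letI : GradedRing F.grade :=
    { (inferInstance : SetLike.GradedMonoid F.grade),
      (inferInstance : DirectSum.Decomposition F.grade) with }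
  -- Part B : any frame homomorphism is given by the canonical formulas.
  have hB : ∀ φ : S →+* zipSubring p R,
      (∀ (n : ℤ), ∀ a ∈ F.grade n, φ a ∈ (zipFrame p R).grade n) →
      (∀ s, φ (F.σ s) = (zipFrame p R).σ (φ s)) →
      (∀ s, φ (F.τ s) = (zipFrame p R).τ (φ s)) →
      (zipPi p R).comp φ = π →
      ((∀ a ∈ F.grade 0, φ a = zipIota p R (π a))
        ∧ (∀ n : ℕ, 1 ≤ n → ∀ a ∈ F.grade (-(n : ℤ)),
            ((φ a : zipSubring p R) : Polynomial R × Polynomial R)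
              = (Polynomial.C (π (F.τ a)) * Polynomial.X ^ n, 0))
        ∧ (∀ n : ℕ, 1 ≤ n → ∀ a ∈ F.grade (n : ℤ),
            ((φ a : zipSubring p R) : Polynomial R × Polynomial R)
              = (0, Polynomial.C (π (F.σ a)) * Polynomial.X ^ n))) := by
    intro φ hg hσ hτ hπ
    have hπ' : ∀ s, zipPi p R (φ s) = π s := fun s => RingHom.congr_fun hπ s
    have h0 : ∀ a ∈ F.grade 0, φ a = zipIota p R (π a) := by
      intro a ha
      have hgm : φ a ∈ zipGrade p R 0 := hg 0 a ha
      obtain ⟨b, hb⟩ := hgm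
      rw [if_neg (lt_irrefl (0 : ℤ)), if_pos rfl] at hb
      have hbval : zipPi p R (φ a) = b := by
        show ((φ a : zipSubring p R) : Polynomial R × Polynomial R).1.eval 1 = b
        rw [hb]
        norm_num
      apply Subtype.ext
      rw [hb, coe_zipIota, ← hπ' a, hbval]
    refine ⟨h0, ?_, ?_⟩
    · intro n hn a ha
      have hgm : φ a ∈ zipGrade p R (-(n : ℤ)) := hg (-(n : ℤ)) a ha
      obtain ⟨b, hb⟩ := hgm
      rw [if_pos (by omega : -(n : ℤ) < 0)] at hb
      rw [show (-(-(n : ℤ))).toNat = n from by omega] at hb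
      have hτa : φ (F.τ a) = zipIota p R b := by
        rw [hτ a]
        show zipTau p R (φ a) = _
        rw [zipTau_apply, hb]
        norm_num
      have h2 : zipIota p R (π (F.τ a)) = zipIota p R b := by
        rw [← h0 (F.τ a) (F.τ_mem a), hτa]
      have hb' : b = π (F.τ a) := (zipIota_injective p R h2).symm
      rw [hb, hb']
    · intro n hn a ha
      have hgm : φ a ∈ zipGrade p R (n : ℤ) := hg (n : ℤ) a ha
      obtain ⟨b, hb⟩ := hgm
      rw [if_neg (by omega : ¬ (n : ℤ) < 0), if_neg (by omega : ¬ (n : ℤ) = 0)] at hb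
      rw [show ((n : ℤ)).toNat = n from by omega] at hb
      have hσa : φ (F.σ a) = zipIota p R b := by
        rw [hσ a]
        show zipSigma p R (φ a) = _
        rw [zipSigma_apply, hb]
        norm_num
      have h2 : zipIota p R (π (F.σ a)) = zipIota p R b := by
        rw [← h0 (F.σ a) (F.σ_mem a), hσa]
      have hb' : b = π (F.σ a) := (zipIota_injective p R h2).symm
      rw [hb, hb']
  -- Existence : assemble the canonical frame homomorphism from the maps `ψₙ`.
  obtain ⟨ψR, hψR⟩ : ∃ ψR : (DirectSum ℤ (fun i : ℤ => F.grade i)) →+* zipSubring p R,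
      ∀ (n : ℤ) (a : F.grade n),
        ψR (DirectSum.of (fun i : ℤ => F.grade i) n a) = framePsi p R F π n a := by
    have hone : framePsi p R F π 0
        (GradedMonoid.GOne.one (A := fun i : ℤ => F.grade i)) = 1 := by
      rw [framePsi_of_zero p R F π rfl, SetLike.coe_gOne, map_one, map_one]
    have hmul : ∀ {i j : ℤ} (ai : F.grade i) (aj : F.grade j),
        framePsi p R F π (i + j)
          (GradedMonoid.GMul.mul (A := fun i : ℤ => F.grade i) ai aj)
        = framePsi p R F π i ai * framePsi p R F π j aj := by
      intro i j ai aj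
      exact framePsi_mul p R F π hπτ hπker ai aj _ (SetLike.coe_gMul F.grade ai aj)
    exact ⟨DirectSum.toSemiring (framePsi p R F π) hone hmul,
      fun n a => DirectSum.toSemiring_of (framePsi p R F π) hone hmul n a⟩
  set φ₀ : S →+* zipSubring p R :=
    ψR.comp ((DirectSum.decomposeRingEquiv F.grade :
      S ≃+* DirectSum ℤ (fun i : ℤ => F.grade i)) : S →+* _) with hφ₀def
  have hφval : ∀ (n : ℤ) (a : F.grade n), φ₀ (a : S) = framePsi p R F π n a := by
    intro n a
    rw [hφ₀def, RingHom.comp_apply]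
    have hd : ((DirectSum.decomposeRingEquiv F.grade :
        S ≃+* DirectSum ℤ (fun i : ℤ => F.grade i)) : S →+* _) (a : S)
        = DirectSum.of (fun i : ℤ => F.grade i) n a := DirectSum.decompose_coe F.grade a
    rw [hd, hψR]
  have hg0 : ∀ (n : ℤ), ∀ a ∈ F.grade n, φ₀ a ∈ (zipFrame p R).grade n := by
    intro n a ha
    have h := hφval n ⟨a, ha⟩
    rw [show ((⟨a, ha⟩ : F.grade n) : S) = a from rfl] at h
    rw [h]
    exact framePsi_mem p R F π n ⟨a, ha⟩
  have hσ0 : ∀ s, φ₀ (F.σ s) = (zipFrame p R).σ (φ₀ s) := by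
    intro s
    show φ₀ (F.σ s) = zipSigma p R (φ₀ s)
    refine DirectSum.Decomposition.inductionOn F.grade
      (motive := fun t => φ₀ (F.σ t) = zipSigma p R (φ₀ t)) ?_ ?_ ?_ s
    · simp only [map_zero]
    · intro i a
      have hl : φ₀ (F.σ (a : S)) = zipIota p R (π (F.σ (a : S))) := by
        have h := hφval 0 ⟨F.σ (a : S), F.σ_mem (a : S)⟩
        rw [show ((⟨F.σ (a : S), F.σ_mem (a : S)⟩ : F.grade 0) : S) = F.σ (a : S)
          from rfl] at h
        rw [h, framePsi_of_zero p R F π rfl]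
      rcases lt_trichotomy i 0 with h | h | h
      · rw [hl, frame_pi_sigma_neg p R F π h a.2, map_zero, hφval i a,
          framePsi_of_neg p R F π h, zipSigma_zipNeg]
      · subst h
        rw [hl, hφval 0 a, framePsi_of_zero p R F π rfl, zipSigma_zipIota,
          frame_pi_sigma_zero p R F π a.2]
      · rw [hl, hφval i a, framePsi_of_pos p R F π h, zipSigma_zipPos]
    · intro x y hx hy
      rw [map_add, map_add, map_add, map_add, hx, hy]
  have hτ0 : ∀ s, φ₀ (F.τ s) = (zipFrame p R).τ (φ₀ s) := by
    intro s
    show φ₀ (F.τ s) = zipTau p R (φ₀ s)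
    refine DirectSum.Decomposition.inductionOn F.grade
      (motive := fun t => φ₀ (F.τ t) = zipTau p R (φ₀ t)) ?_ ?_ ?_ s
    · simp only [map_zero]
    · intro i a
      have hl : φ₀ (F.τ (a : S)) = zipIota p R (π (F.τ (a : S))) := by
        have h := hφval 0 ⟨F.τ (a : S), F.τ_mem (a : S)⟩
        rw [show ((⟨F.τ (a : S), F.τ_mem (a : S)⟩ : F.grade 0) : S) = F.τ (a : S)
          from rfl] at h
        rw [h, framePsi_of_zero p R F π rfl]
      rcases lt_trichotomy i 0 with h | h | h
      · rw [hl, hφval i a, framePsi_of_neg p R F π h, zipTau_zipNeg]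
      · subst h
        rw [hl, hφval 0 a, framePsi_of_zero p R F π rfl, zipTau_zipIota,
          F.τ_id _ a.2]
      · rw [hl, hφval i a, framePsi_of_pos p R F π h, zipTau_zipPos,
          frame_pi_tau_pos p R F π hπτ hπker h a.2, map_zero]
    · intro x y hx hy
      rw [map_add, map_add, map_add, map_add, hx, hy]
  have hπ0 : (zipPi p R).comp φ₀ = π := by
    refine RingHom.ext fun s => ?_
    show zipPi p R (φ₀ s) = π s
    refine DirectSum.Decomposition.inductionOn F.grade
      (motive := fun t => zipPi p R (φ₀ t) = π t) ?_ ?_ ?_ s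
    · simp only [map_zero]
    · intro i a
      rcases lt_trichotomy i 0 with h | h | h
      · rw [hφval i a, framePsi_of_neg p R F π h, zipPi_zipNeg, ← hπτ]
      · subst h
        rw [hφval 0 a, framePsi_of_zero p R F π rfl, zipPi_zipIota]
      · rw [hφval i a, framePsi_of_pos p R F π h, zipPi_zipPos, hπτ (a : S),
          frame_pi_tau_pos p R F π hπτ hπker h a.2]
    · intro x y hx hy
      rw [map_add, map_add, map_add, hx, hy]
  refine ⟨⟨φ₀, ⟨hg0, hσ0, hτ0, hπ0⟩, ?_⟩, hB⟩
  rintro φ' ⟨hg', hσ', hτ', hπ''⟩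
  obtain ⟨hB0', hBneg', hBpos'⟩ := hB φ' hg' hσ' hτ' hπ''
  obtain ⟨hB0, hBneg, hBpos⟩ := hB φ₀ hg0 hσ0 hτ0 hπ0
  refine RingHom.ext fun s => ?_
  refine DirectSum.Decomposition.inductionOn F.grade
    (motive := fun t => φ' t = φ₀ t) ?_ ?_ ?_ s
  · simp only [map_zero]
  · intro i a
    rcases lt_trichotomy i 0 with h | h | h
    · have hmem : (a : S) ∈ F.grade (-(((-i).toNat : ℕ) : ℤ)) := by
        rw [show (-(((-i).toNat : ℕ) : ℤ)) = i from by omega]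
        exact a.2
      apply Subtype.ext
      rw [hBneg' (-i).toNat (by omega) (a : S) hmem,
        hBneg (-i).toNat (by omega) (a : S) hmem]
    · subst h
      rw [hB0' (a : S) a.2, hB0 (a : S) a.2]
    · have hmem : (a : S) ∈ F.grade ((i.toNat : ℕ) : ℤ) := by
        rw [show ((i.toNat : ℕ) : ℤ) = i from by omega]
        exact a.2
      apply Subtype.ext
      rw [hBpos' i.toNat (by omega) (a : S) hmem,
        hBpos i.toNat (by omega) (a : S) hmem]
  · intro x y hx hy
    rw [map_add, map_add, hx, hy]

end Zip
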